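/- Let c_1, …, c_T be a simplex coding in ℝ^{T−1}, T ≥ 2, and let ρ_1, …, ρ_T be nonnegative reals with ∑_{y=1}^T ρ_y = 1. Set f_ρ = ∑_{y=1}^T ρ_y c_y. Let α ∈ ℝ^{T−1} and let D(α) ∈ {1, …, T} be any label with ⟨c_{D(α)}, α⟩ = max_y ⟨c_y, α⟩. Then the pointwise excess misclassification error is controlled by the distance to f_ρ: max_y ρ_y − ρ_{D(α)} ≤ √(2(T−1)/T) · ‖α − f_ρ‖. Equivalently, by the S-LS inner risk decomposition, max_y ρ_y − ρ_{D(α)} ≤ √(2(T−1)/T) · (∑_y ρ_y ‖c_y − α‖² − ∑_y ρ_y ‖c_y − f_ρ‖²)^{1/2}. -/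

import Mathlib

open scoped RealInnerProductSpace

/-- pointwise comparison for the simplex least squares loss.  With
`f_ρ = ∑ y, ρ y • c y` and `D α` any label maximizing `y ↦ ⟪c y, α⟫`, the pointwise excess
misclassification error satisfies
`max_y ρ y - ρ (D α) ≤ √(2(T-1)/T) ‖α - f_ρ‖`, and equivalently (via the S-LS inner risk
decomposition)
`max_y ρ y - ρ (D α) ≤ √(2(T-1)/T) (∑ y, ρ y ‖c y - α‖² - ∑ y, ρ y ‖c y - f_ρ‖²)^{1/2}`. -/
theorem simplex_ls_pointwise_comparison (T : ℕ) (hT : 2 ≤ T)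
    (c : Fin T → EuclideanSpace ℝ (Fin (T - 1)))
    (hnorm : ∀ y, ‖c y‖ = 1)
    (hinner : ∀ y y', y ≠ y' → ⟪c y, c y'⟫ = -(1 / ((T : ℝ) - 1)))
    (hsum : ∑ y, c y = 0)
    (ρ : Fin T → ℝ) (hρ : ∀ y, 0 ≤ ρ y) (hρsum : ∑ y, ρ y = 1)
    (fρ : EuclideanSpace ℝ (Fin (T - 1))) (hfρ : fρ = ∑ y, ρ y • c y)
    (α : EuclideanSpace ℝ (Fin (T - 1)))
    (D : Fin T) (hD : ∀ y, ⟪c y, α⟫ ≤ ⟪c D, α⟫) :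
    (∀ y, ρ y - ρ D ≤ Real.sqrt (2 * ((T : ℝ) - 1) / T) * ‖α - fρ‖) ∧
    (∀ y, ρ y - ρ D ≤ Real.sqrt (2 * ((T : ℝ) - 1) / T) *
      Real.sqrt (∑ y', ρ y' * ‖c y' - α‖ ^ 2 - ∑ y', ρ y' * ‖c y' - fρ‖ ^ 2)) := by
  have hT2 : (2:ℝ) ≤ (T:ℝ) := by exact_mod_cast hT
  have hT1pos : (0:ℝ) < (T:ℝ) - 1 := by linarith
  have hTpos : (0:ℝ) < (T:ℝ) := by linarith
  -- inner product of code vectors with fρ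
  have hfin : ∀ y, ⟪c y, fρ⟫ = ρ y * ((T:ℝ)/((T:ℝ)-1)) - 1/((T:ℝ)-1) := by
    intro y
    rw [hfρ, inner_sum]
    simp_rw [real_inner_smul_right]
    have hsplit := Finset.add_sum_erase Finset.univ
      (fun y' => ρ y' * ⟪c y, c y'⟫) (Finset.mem_univ y)
    rw [← hsplit]
    have h1 : ⟪c y, c y⟫ = (1:ℝ) := by
      rw [real_inner_self_eq_norm_sq, hnorm]; norm_num
    have h2 : ∑ y' ∈ Finset.univ.erase y, ρ y' * ⟪c y, c y'⟫
        = (1 - ρ y) * (-(1 / ((T:ℝ) - 1))) := by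
      rw [Finset.sum_congr rfl (fun y' hy' => by
        rw [hinner y y' (Ne.symm (Finset.ne_of_mem_erase hy'))]),
        ← Finset.sum_mul]
      congr 1
      have := Finset.add_sum_erase Finset.univ ρ (Finset.mem_univ y)
      rw [hρsum] at this
      linarith
    simp only [h1, h2]
    field_simp
    ring
  -- the first bound
  have key : ∀ y, ρ y - ρ D ≤ Real.sqrt (2 * ((T : ℝ) - 1) / T) * ‖α - fρ‖ := by
    intro y
    by_cases hyD : y = D
    · subst hyD
      simp only [sub_self]
      positivity
    · have h1 : ⟪c y - c D, fρ⟫ = (ρ y - ρ D) * ((T:ℝ)/((T:ℝ)-1)) := by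
        rw [inner_sub_left, hfin y, hfin D]; ring
      have h2 : ⟪c y - c D, α⟫ ≤ 0 := by
        rw [inner_sub_left]; linarith [hD y]
      have h3 : ⟪c y - c D, fρ - α⟫ ≤ ‖c y - c D‖ * ‖fρ - α‖ :=
        real_inner_le_norm _ _
      have h4 : ‖c y - c D‖ = Real.sqrt (2 * (T:ℝ) / ((T:ℝ)-1)) := by
        have hsq : ‖c y - c D‖^2 = 2 * (T:ℝ) / ((T:ℝ)-1) := by
          rw [norm_sub_sq_real, hnorm, hnorm, hinner y D hyD]
          field_simp; ring
        rw [← hsq, Real.sqrt_sq (norm_nonneg _)]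
      have h5 : (ρ y - ρ D) * ((T:ℝ)/((T:ℝ)-1))
          ≤ Real.sqrt (2 * (T:ℝ) / ((T:ℝ)-1)) * ‖fρ - α‖ := by
        rw [← h1]
        have hsplit2 : ⟪c y - c D, fρ⟫ = ⟪c y - c D, fρ - α⟫ + ⟪c y - c D, α⟫ := by
          rw [← inner_add_right]; congr 1; abel
        rw [hsplit2, ← h4]
        linarith
      have hid : Real.sqrt (2 * ((T : ℝ) - 1) / T)
          = (((T:ℝ)-1)/T) * Real.sqrt (2 * (T:ℝ) / ((T:ℝ)-1)) := by
        rw [show (((T:ℝ)-1)/T) = Real.sqrt ((((T:ℝ)-1)/T)^2) by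
            rw [Real.sqrt_sq (by positivity)],
          ← Real.sqrt_mul (by positivity)]
        congr 1
        field_simp
      rw [hid, norm_sub_rev α fρ]
      have h6 := mul_le_mul_of_nonneg_right h5 (le_of_lt (div_pos hT1pos hTpos))
      calc ρ y - ρ D = (ρ y - ρ D) * ((T:ℝ)/((T:ℝ)-1)) * (((T:ℝ)-1)/T) := by
            field_simp
        _ ≤ Real.sqrt (2 * (T:ℝ) / ((T:ℝ)-1)) * ‖fρ - α‖ * (((T:ℝ)-1)/T) := h6
        _ = ((T:ℝ)-1)/T * Real.sqrt (2 * (T:ℝ) / ((T:ℝ)-1)) * ‖fρ - α‖ := by ring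
  -- the inner risk decomposition
  have hdecomp : ∑ y', ρ y' * ‖c y' - α‖ ^ 2 - ∑ y', ρ y' * ‖c y' - fρ‖ ^ 2
      = ‖α - fρ‖ ^ 2 := by
    have expand : ∀ y', ‖c y' - α‖^2
        = ‖c y' - fρ‖^2 + 2 * ⟪c y' - fρ, fρ - α⟫ + ‖fρ - α‖^2 := by
      intro y'
      have h : c y' - α = (c y' - fρ) + (fρ - α) := by abel
      rw [h, norm_add_sq_real]
    have hcross : ∑ y', ρ y' * ⟪c y' - fρ, fρ - α⟫ = 0 := by
      simp_rw [← real_inner_smul_left]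
      rw [← sum_inner]
      have hz : ∑ y', ρ y' • (c y' - fρ) = 0 := by
        simp_rw [smul_sub]
        rw [Finset.sum_sub_distrib, ← Finset.sum_smul, hρsum, one_smul, ← hfρ, sub_self]
      rw [hz, inner_zero_left]
    simp_rw [expand, mul_add]
    rw [Finset.sum_add_distrib, Finset.sum_add_distrib]
    have hz2 : ∑ y', ρ y' * (2 * ⟪c y' - fρ, fρ - α⟫) = 0 := by
      have hcomm : ∀ y', ρ y' * (2 * ⟪c y' - fρ, fρ - α⟫)
          = 2 * (ρ y' * ⟪c y' - fρ, fρ - α⟫) := fun y' => by ring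
      simp_rw [hcomm]
      rw [← Finset.mul_sum, hcross, mul_zero]
    rw [hz2, ← Finset.sum_mul, hρsum, one_mul, norm_sub_rev]
    ring
  refine ⟨key, fun y => ?_⟩
  rw [hdecomp, Real.sqrt_sq (norm_nonneg _)]
  exact key y
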